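/- Let N = (N₀,M0) be a two-level PT-net system with T = L ∪ H, and let R be the least relation generated from M0 R M0 by the rules: (i) if M1 R M2 and M2[h⟩M2' with h ∈ H then M1 R M2'; (ii) if M1 R M2, M1[l⟩M1' and M2[l⟩M2' with l ∈ L then M1' R M2'. Then N has the property BNDC if and only if for all reachable markings M1 of N₀\H and M2 of N, M1 R M2 entails L(N₀\H, M1) = L(N₀\H, M2). -/
import Mathlib


/-! ## Labelled transition systems -/

structure LTS (Q : Type _) (A : Type _) where
  init : Q
  tr : Q → A → Q → Prop

namespace LTS

variable {Q Q' A : Type _}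

/-- One unobservable step. -/
def TauStep (S : LTS Q A) (Obs : Set A) (q q' : Q) : Prop :=
  ∃ τ, τ ∉ Obs ∧ S.tr q τ q'

/-- `q →* q'` : reflexive-transitive closure of unobservable steps. -/
def TauStar (S : LTS Q A) (Obs : Set A) : Q → Q → Prop :=
  Relation.ReflTransGen (S.TauStep Obs)

/-- Weak steps producing a word of observable labels. -/
inductive WeakSteps (S : LTS Q A) (Obs : Set A) : Q → List A → Q → Prop
  | nil (q : Q) : WeakSteps S Obs q [] q
  | tau {q q' q'' : Q} {w : List A} {τ : A} :
      τ ∉ Obs → S.tr q τ q' → WeakSteps S Obs q' w q'' → WeakSteps S Obs q w q''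
  | obs {q q' q'' : Q} {w : List A} {σ : A} :
      σ ∈ Obs → S.tr q σ q' → WeakSteps S Obs q' w q'' → WeakSteps S Obs q (σ :: w) q''

/-- The language of a partially observed LTS. -/
def lang (S : LTS Q A) (Obs : Set A) : Set (List A) :=
  { w | ∃ q, S.WeakSteps Obs S.init w q }

end LTS

/-- `R` is a weak simulation of `S` by `S'`. -/
def IsWeakSimulation {Q Q' A : Type _} (Obs : Set A) (S : LTS Q A) (S' : LTS Q' A)
    (R : Q → Q' → Prop) : Prop :=
  R S.init S'.init ∧
  ∀ q1 q1', R q1 q1' →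
    (∀ σ ∈ Obs, ∀ q2, S.tr q1 σ q2 →
      ∃ q1'' q2'' q2', S'.TauStar Obs q1' q1'' ∧ S'.tr q1'' σ q2'' ∧
        S'.TauStar Obs q2'' q2' ∧ R q2 q2') ∧
    (∀ τ ∉ Obs, ∀ q2, S.tr q1 τ q2 →
      ∃ q2', S'.TauStar Obs q1' q2' ∧ R q2 q2')

/-- `S` is weakly simulated by `S'`. -/
def WeaklySimulated {Q Q' A : Type _} (Obs : Set A) (S : LTS Q A) (S' : LTS Q' A) : Prop :=
  ∃ R, IsWeakSimulation Obs S S' R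

/-- `R` is a weak bisimulation between `S` and `S'`. -/
def IsWeakBisimulation {Q Q' A : Type _} (Obs : Set A) (S : LTS Q A) (S' : LTS Q' A)
    (R : Q → Q' → Prop) : Prop :=
  IsWeakSimulation Obs S S' R ∧ IsWeakSimulation Obs S' S (fun q' q => R q q')

/-- `S` and `S'` are weakly bisimilar. -/
def WeaklyBisimilar {Q Q' A : Type _} (Obs : Set A) (S : LTS Q A) (S' : LTS Q' A) : Prop :=
  ∃ R, IsWeakBisimulation Obs S S' R

/-! ## Place/Transition Petri nets -/

/-- A PT-net over a universe `P` of places and `Tr` of transitions: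
a finite set of places, a finite set of transitions, and input/output flows.
Flows of non-transitions vanish. -/
structure PTNet (P : Type _) (Tr : Type _) where
  places : Finset P
  transitions : Finset Tr
  pre : Tr → P → ℕ
  post : Tr → P → ℕ
  pre_eq_zero : ∀ t ∉ transitions, ∀ p, pre t p = 0
  post_eq_zero : ∀ t ∉ transitions, ∀ p, post t p = 0

namespace PTNet

variable {P Tr : Type _} [DecidableEq P] [DecidableEq Tr]

/-- `M[t⟩` : transition `t` is enabled at marking `M`. -/
def Enabled (N : PTNet P Tr) (M : P → ℕ) (t : Tr) : Prop :=
  t ∈ N.transitions ∧ ∀ p ∈ N.places, N.pre t p ≤ M p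

/-- The marking obtained by firing `t` at `M`. -/
def fire (N : PTNet P Tr) (M : P → ℕ) (t : Tr) : P → ℕ :=
  fun p => if p ∈ N.places then M p + N.post t p - N.pre t p else M p

/-- `M[t⟩M'`. -/
def Fires (N : PTNet P Tr) (M : P → ℕ) (t : Tr) (M' : P → ℕ) : Prop :=
  N.Enabled M t ∧ M' = N.fire M t

/-- `M[s⟩M'` for a sequence `s` of transitions. -/
def FiresSeq (N : PTNet P Tr) : (P → ℕ) → List Tr → (P → ℕ) → Prop
  | M, [], M' => M' = M
  | M, t :: s, M' => ∃ M'', N.Fires M t M'' ∧ N.FiresSeq M'' s M'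

/-- `M'` is reachable from `M`. -/
def Reachable (N : PTNet P Tr) (M M' : P → ℕ) : Prop :=
  ∃ s, N.FiresSeq M s M'

/-- The restriction `N \ T'` of a net: the transitions in `T'` are removed. -/
def restrict (N : PTNet P Tr) (T' : Finset Tr) : PTNet P Tr where
  places := N.places
  transitions := N.transitions \ T'
  pre := fun t p => if t ∈ N.transitions \ T' then N.pre t p else 0
  post := fun t p => if t ∈ N.transitions \ T' then N.post t p else 0
  pre_eq_zero := by intro t ht p; simp [ht]
  post_eq_zero := by intro t ht p; simp [ht]

/-- The composition `N1 | N2` of two nets (intended for disjoint place sets);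
shared transitions synchronize. -/
def comp (N1 N2 : PTNet P Tr) : PTNet P Tr where
  places := N1.places ∪ N2.places
  transitions := N1.transitions ∪ N2.transitions
  pre := fun t p => if p ∈ N1.places then N1.pre t p else N2.pre t p
  post := fun t p => if p ∈ N1.places then N1.post t p else N2.post t p
  pre_eq_zero := by
    intro t ht p
    simp only [Finset.mem_union, not_or] at ht
    by_cases hp : p ∈ N1.places <;>
      simp [hp, N1.pre_eq_zero t ht.1, N2.pre_eq_zero t ht.2]
  post_eq_zero := by
    intro t ht p
    simp only [Finset.mem_union, not_or] at ht
    by_cases hp : p ∈ N1.places <;>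
      simp [hp, N1.post_eq_zero t ht.1, N2.post_eq_zero t ht.2]

/-- The union of two initial markings (agrees with `M1` on the places of `N1`,
with `M2` elsewhere). -/
def combine (N1 : PTNet P Tr) (M1 M2 : P → ℕ) : P → ℕ :=
  fun p => if p ∈ N1.places then M1 p else M2 p

/-- The reachability graph of a marked net, as an LTS on markings. -/
def toLTS (N : PTNet P Tr) (M0 : P → ℕ) : LTS (P → ℕ) Tr where
  init := M0
  tr := fun M t M' => N.Fires M t M'

/-- The language of the net system `(N, M0)` whose observable transitions are
those in `L` (labelled by themselves): projections of firing sequences onto `L*`. -/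
def lang (N : PTNet P Tr) (M0 : P → ℕ) (L : Finset Tr) : Set (List Tr) :=
  { w | ∃ s M, N.FiresSeq M0 s M ∧ s.filter (· ∈ L) = w }

/-- The free language of the net system `(N, M0)`: all of its firing sequences. -/
def freeLang (N : PTNet P Tr) (M0 : P → ℕ) : Set (List Tr) :=
  { s | ∃ M, N.FiresSeq M0 s M }

/-- The net with given places and transitions and empty flow. -/
def ofSets (Pl : Finset P) (Ts : Finset Tr) : PTNet P Tr where
  places := Pl
  transitions := Ts
  pre := fun _ _ => 0
  post := fun _ _ => 0
  pre_eq_zero := fun _ _ _ => rfl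
  post_eq_zero := fun _ _ _ => rfl

end PTNet

/-! ## Non-interference properties -/

section Security

variable {P Tr : Type _} [DecidableEq P] [DecidableEq Tr]

/-- Non-Deducibility on Compositions: for every high-level net system `N'`
(with any initial marking `M0'`) whose places are disjoint from those of `N` and
whose transitions avoid `L`, the systems `N \ H` and `(N | N') \ (H \ H')` are
language equivalent, the observable transitions being those in `L`. -/
def NDC (N : PTNet P Tr) (M0 : P → ℕ) (L H : Finset Tr) : Prop :=
  ∀ (N' : PTNet P Tr) (M0' : P → ℕ),
    Disjoint N.places N'.places → Disjoint N'.transitions L →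
    (N.restrict H).lang M0 L =
      ((N.comp N').restrict (H \ N'.transitions)).lang (N.combine M0 M0') L

/-- Bisimulation-based Non-Deducibility on Compositions: as `NDC`, but with
weak bisimilarity in place of language equivalence. -/
def BNDC (N : PTNet P Tr) (M0 : P → ℕ) (L H : Finset Tr) : Prop :=
  ∀ (N' : PTNet P Tr) (M0' : P → ℕ),
    Disjoint N.places N'.places → Disjoint N'.transitions L →
    WeaklyBisimilar (L : Set Tr) ((N.restrict H).toLTS M0)
      (((N.comp N').restrict (H \ N'.transitions)).toLTS (N.combine M0 M0'))

/-- Strong BNDC: whenever a reachable marking `M1` enables a high transition `h`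
with `M1[h⟩M2`, the systems `(N \ H, M1)` and `(N \ H, M2)` are weakly bisimilar. -/
def SBNDC (N : PTNet P Tr) (M0 : P → ℕ) (L H : Finset Tr) : Prop :=
  ∀ M1 h M2, N.Reachable M0 M1 → h ∈ H → N.Fires M1 h M2 →
    WeaklyBisimilar (L : Set Tr) ((N.restrict H).toLTS M1) ((N.restrict H).toLTS M2)

/-- The least relation generated from `M0 R M0` by:
(i) if `M1 R M2` and `M2[h⟩M2'` with `h ∈ H` then `M1 R M2'`;
(ii) if `M1 R M2`, `M1[l⟩M1'` (in `N \ H`) and `M2[l⟩M2'` with `l ∈ L`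
then `M1' R M2'`. -/
inductive RRel (N : PTNet P Tr) (M0 : P → ℕ) (L H : Finset Tr) : (P → ℕ) → (P → ℕ) → Prop
  | base : RRel N M0 L H M0 M0
  | high {M1 M2 M2' : P → ℕ} {h : Tr} : h ∈ H → RRel N M0 L H M1 M2 →
      N.Fires M2 h M2' → RRel N M0 L H M1 M2'
  | low {M1 M2 M1' M2' : P → ℕ} {l : Tr} : l ∈ L → RRel N M0 L H M1 M2 →
      (N.restrict H).Fires M1 l M1' → N.Fires M2 l M2' → RRel N M0 L H M1' M2'

/-- The property `P(h,l)`: for all `w ∈ (L ∪ H)*` and `s ∈ L*`, if `M0[w⟩M1`,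
`M1[h⟩M2`, `M1[s⟩M3` and `M2[s⟩M4`, then `M3[l⟩` iff `M4[l⟩`. -/
def PropP (N : PTNet P Tr) (M0 : P → ℕ) (L H : Finset Tr) (h l : Tr) : Prop :=
  ∀ (w s : List Tr) (M1 M2 M3 M4 : P → ℕ),
    (∀ t ∈ w, t ∈ L ∪ H) → (∀ t ∈ s, t ∈ L) →
    N.FiresSeq M0 w M1 → N.Fires M1 h M2 →
    N.FiresSeq M1 s M3 → N.FiresSeq M2 s M4 →
    (N.Enabled M3 l ↔ N.Enabled M4 l)

/-- Intransitive Non-Interference for a three-level net system: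
`(N \ D, M)` has NDC (w.r.t. low `L`, high `H`) for `M = M0` and for every
marking `M` with `M0[υd⟩M` in `N`, `d ∈ D`. -/
def INI (N : PTNet P Tr) (M0 : P → ℕ) (L D H : Finset Tr) : Prop :=
  NDC (N.restrict D) M0 L H ∧
  ∀ (υ : List Tr) (d : Tr) (M : P → ℕ), d ∈ D → N.FiresSeq M0 (υ ++ [d]) M →
    NDC (N.restrict D) M L H

/-- Bisimulation-based Intransitive Non-Interference: as `INI` with `BNDC`. -/
def BINI (N : PTNet P Tr) (M0 : P → ℕ) (L D H : Finset Tr) : Prop :=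
  BNDC (N.restrict D) M0 L H ∧
  ∀ (υ : List Tr) (d : Tr) (M : P → ℕ), d ∈ D → N.FiresSeq M0 (υ ++ [d]) M →
    BNDC (N.restrict D) M L H

/-- The property `Q(h,l)`: for all `χ ∈ T*` and `s ∈ L*`, if `M0[χ⟩M1`,
`M1[h⟩M2`, `M1[s⟩M3` and `M2[s⟩M4`, then `M3[l⟩` iff `M4[l⟩`. -/
def PropQ (N : PTNet P Tr) (M0 : P → ℕ) (L : Finset Tr) (h l : Tr) : Prop :=
  ∀ (χ s : List Tr) (M1 M2 M3 M4 : P → ℕ),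
    (∀ t ∈ χ, t ∈ N.transitions) → (∀ t ∈ s, t ∈ L) →
    N.FiresSeq M0 χ M1 → N.Fires M1 h M2 →
    N.FiresSeq M1 s M3 → N.FiresSeq M2 s M4 →
    (N.Enabled M3 l ↔ N.Enabled M4 l)

end Security

section BndcAux

variable {P Tr : Type _} [DecidableEq P] [DecidableEq Tr]

private lemma fires_det (N : PTNet P Tr) {M M1 M2 : P → ℕ} {t : Tr}
    (h1 : N.Fires M t M1) (h2 : N.Fires M t M2) : M1 = M2 := by
  rw [h1.2, h2.2]

private lemma firesSeq_det (N : PTNet P Tr) : ∀ {s : List Tr} {M M1 M2 : P → ℕ},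
    N.FiresSeq M s M1 → N.FiresSeq M s M2 → M1 = M2
  | [], _, _, _, h1, h2 => h1.trans h2.symm
  | t :: s, M, M1, M2, ⟨X1, hf1, hs1⟩, ⟨X2, hf2, hs2⟩ => by
      cases fires_det N hf1 hf2
      exact firesSeq_det N hs1 hs2

private lemma firesSeq_append (N : PTNet P Tr) : ∀ {s : List Tr} {M M' M'' : P → ℕ} {t : Tr},
    N.FiresSeq M s M' → N.Fires M' t M'' → N.FiresSeq M (s ++ [t]) M''
  | [], M, M', M'', t, h1, h2 => by
      cases h1; exact ⟨M'', h2, rfl⟩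
  | a :: s, M, M', M'', t, ⟨X, hf, hs⟩, h2 =>
      ⟨X, hf, firesSeq_append N hs h2⟩

private lemma reachable_step (N : PTNet P Tr) {M0 M M' : P → ℕ} {t : Tr}
    (h : N.Reachable M0 M) (h2 : N.Fires M t M') : N.Reachable M0 M' := by
  obtain ⟨s, hs⟩ := h
  exact ⟨s ++ [t], firesSeq_append N hs h2⟩

/-- If two markings agree on the places, firing preserves agreement. -/
private lemma agree_fires (N : PTNet P Tr) {M M' X : P → ℕ} {t : Tr}
    (hag : ∀ p ∈ N.places, M p = M' p) (hf : N.Fires M t X) :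
    N.Fires M' t (N.fire M' t) ∧ ∀ p ∈ N.places, X p = N.fire M' t p := by
  obtain ⟨⟨ht, hpre⟩, hX⟩ := hf
  refine ⟨⟨⟨ht, fun p hp => (hag p hp) ▸ hpre p hp⟩, rfl⟩, ?_⟩
  intro p hp
  rw [hX]
  simp only [PTNet.fire, if_pos hp, hag p hp]

private lemma agree_firesSeq (N : PTNet P Tr) : ∀ {s : List Tr} {M M' X : P → ℕ},
    (∀ p ∈ N.places, M p = M' p) → N.FiresSeq M s X →
    ∃ Y, N.FiresSeq M' s Y
  | [], M, M', X, hag, hs => ⟨M', rfl⟩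
  | t :: s, M, M', X, hag, ⟨Z, hf, hs⟩ => by
      obtain ⟨hf', hag'⟩ := agree_fires N hag hf
      obtain ⟨Y, hY⟩ := agree_firesSeq N hag' hs
      exact ⟨Y, _, hf', hY⟩

/-- Free languages only depend on the marking of the places. -/
private lemma freeLang_congr (N : PTNet P Tr) {M M' : P → ℕ}
    (hag : ∀ p ∈ N.places, M p = M' p) : N.freeLang M = N.freeLang M' := by
  ext s
  constructor
  · rintro ⟨X, hX⟩; exact agree_firesSeq N hag hX
  · rintro ⟨X, hX⟩
    exact agree_firesSeq N (fun p hp => (hag p hp).symm) hX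

/-- Language derivative along a firing. -/
private lemma freeLang_fire (N : PTNet P Tr) {M M' : P → ℕ} {l : Tr}
    (h : N.Fires M l M') : N.freeLang M' = {s | l :: s ∈ N.freeLang M} := by
  ext s
  constructor
  · rintro ⟨X, hX⟩; exact ⟨X, M', h, hX⟩
  · rintro ⟨X, Y, hf, hs⟩
    cases fires_det N hf h
    exact ⟨X, hs⟩

end BndcAux

section BndcAux2
set_option linter.unusedSectionVars false

variable {P Tr : Type _} [DecidableEq P] [DecidableEq Tr]
variable {N : PTNet P Tr} {L H : Finset Tr}

private lemma mem_restrict_trans {t : Tr} (hT : N.transitions = L ∪ H) (hLH : Disjoint L H) :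
    t ∈ (N.restrict H).transitions ↔ t ∈ L := by
  simp only [PTNet.restrict, Finset.mem_sdiff, hT, Finset.mem_union]
  constructor
  · rintro ⟨h1 | h1, h2⟩
    · exact h1
    · exact absurd h1 h2
  · intro h
    exact ⟨Or.inl h, fun hh => (Finset.disjoint_left.1 hLH) h hh⟩

private lemma restrict_pre_eq {t : Tr} (ht : t ∈ (N.restrict H).transitions) :
    (N.restrict H).pre t = N.pre t := by
  funext p
  simp only [PTNet.restrict] at ht ⊢
  rw [if_pos ht]

private lemma restrict_post_eq {t : Tr} (ht : t ∈ (N.restrict H).transitions) :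
    (N.restrict H).post t = N.post t := by
  funext p
  simp only [PTNet.restrict] at ht ⊢
  rw [if_pos ht]

private lemma restrict_places : (N.restrict H).places = N.places := rfl

private lemma restrict_fire_eq {t : Tr} {M : P → ℕ} (ht : t ∈ (N.restrict H).transitions) :
    (N.restrict H).fire M t = N.fire M t := by
  funext p
  simp only [PTNet.fire, restrict_places, restrict_pre_eq ht, restrict_post_eq ht]

private lemma restrict_fires_iff (hT : N.transitions = L ∪ H) (hLH : Disjoint L H)
    {l : Tr} (hl : l ∈ L) {M M' : P → ℕ} :
    (N.restrict H).Fires M l M' ↔ N.Fires M l M' := by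
  have htl : l ∈ (N.restrict H).transitions := (mem_restrict_trans hT hLH).2 hl
  have htl' : l ∈ N.transitions := by rw [hT]; exact Finset.mem_union_left _ hl
  constructor
  · rintro ⟨⟨h1, h2⟩, h3⟩
    refine ⟨⟨htl', fun p hp => ?_⟩, by rw [h3, restrict_fire_eq htl]⟩
    have := h2 p hp
    rwa [restrict_pre_eq htl] at this
  · rintro ⟨⟨h1, h2⟩, h3⟩
    refine ⟨⟨htl, fun p hp => ?_⟩, by rw [h3, restrict_fire_eq htl]⟩
    rw [restrict_pre_eq htl]
    exact h2 p hp

/-- Transitions of `N \ H` are low. -/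
private lemma restrict_fires_low (hT : N.transitions = L ∪ H) (hLH : Disjoint L H)
    {t : Tr} {M M' : P → ℕ} (h : (N.restrict H).Fires M t M') : t ∈ L :=
  (mem_restrict_trans hT hLH).1 h.1.1

/-- `N \ H` has no unobservable steps. -/
private lemma restrict_tauStar_eq (hT : N.transitions = L ∪ H) (hLH : Disjoint L H)
    {M0 : P → ℕ} {q q' : P → ℕ}
    (h : LTS.TauStar ((N.restrict H).toLTS M0) (↑L : Set Tr) q q') : q = q' := by
  induction h with
  | refl => rfl
  | tail _ h2 ih =>
      obtain ⟨τ, hτ, hf⟩ := h2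
      exact absurd (Finset.mem_coe.2 (restrict_fires_low hT hLH hf)) hτ

end BndcAux2

section BndcAux3
set_option linter.unusedSectionVars false

variable {P Tr : Type _} [DecidableEq P] [DecidableEq Tr]
variable {N N' : PTNet P Tr} {L H : Finset Tr} {M0 : P → ℕ}

/-- Projection of a composed marking to an `N`-marking (default `M0` outside). -/
private lemma pi_combine (M0 M0' : P → ℕ) :
    N.combine (N.combine M0 M0') M0 = M0 := by
  funext p
  simp only [PTNet.combine]
  split <;> rfl

private lemma comp_places_mem {p : P} :
    p ∈ ((N.comp N').restrict (H \ N'.transitions)).places ↔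
      p ∈ N.places ∨ p ∈ N'.places := by
  simp [PTNet.restrict, PTNet.comp, Finset.mem_union]

private lemma D_trans_low (hT : N.transitions = L ∪ H) (hLH : Disjoint L H)
    {l : Tr} (hl : l ∈ L) :
    l ∈ ((N.comp N').restrict (H \ N'.transitions)).transitions := by
  have hlT : l ∈ N.transitions := by rw [hT]; exact Finset.mem_union_left _ hl
  have hlH : l ∉ H := fun hh => (Finset.disjoint_left.1 hLH) hl hh
  simp only [PTNet.restrict, PTNet.comp, Finset.mem_sdiff, Finset.mem_union]
  exact ⟨Or.inl hlT, fun hx => hlH hx.1⟩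

private lemma D_trans_of_N (hT : N.transitions = L ∪ H) {t : Tr} (ht : t ∈ N.transitions)
    (h2 : t ∈ H → t ∈ N'.transitions) :
    t ∈ ((N.comp N').restrict (H \ N'.transitions)).transitions := by
  simp only [PTNet.restrict, PTNet.comp, Finset.mem_sdiff, Finset.mem_union]
  exact ⟨Or.inl ht, fun hx => hx.2 (h2 hx.1)⟩

private lemma D_pre_pl {t : Tr} {p : P}
    (ht : t ∈ ((N.comp N').restrict (H \ N'.transitions)).transitions) (hp : p ∈ N.places) :
    ((N.comp N').restrict (H \ N'.transitions)).pre t p = N.pre t p := by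
  simp only [PTNet.restrict] at ht ⊢
  rw [if_pos ht]
  simp [PTNet.comp, hp]

private lemma D_post_pl {t : Tr} {p : P}
    (ht : t ∈ ((N.comp N').restrict (H \ N'.transitions)).transitions) (hp : p ∈ N.places) :
    ((N.comp N').restrict (H \ N'.transitions)).post t p = N.post t p := by
  simp only [PTNet.restrict] at ht ⊢
  rw [if_pos ht]
  simp [PTNet.comp, hp]

/-- Firing an `N`-transition in the composed system projects to an `N`-firing. -/
private lemma D_fires_pi {t : Tr} {q q' : P → ℕ} (ht : t ∈ N.transitions)
    (hD : ((N.comp N').restrict (H \ N'.transitions)).Fires q t q') :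
    N.Fires (N.combine q M0) t (N.combine q' M0) := by
  obtain ⟨⟨htD, hpre⟩, hfire⟩ := hD
  constructor
  · refine ⟨ht, fun p hp => ?_⟩
    have := hpre p (comp_places_mem.2 (Or.inl hp))
    rw [D_pre_pl htD hp] at this
    simpa [PTNet.combine, hp] using this
  · funext p
    by_cases hp : p ∈ N.places
    · have : q' p = q p + N.post t p - N.pre t p := by
        rw [hfire]
        simp only [PTNet.fire, if_pos (comp_places_mem.2 (Or.inl hp)),
          D_pre_pl htD hp, D_post_pl htD hp]
      simp [PTNet.combine, PTNet.fire, hp, this]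
    · simp [PTNet.combine, PTNet.fire, hp]

/-- Firing a non-`N` transition in the composed system leaves the projection fixed. -/
private lemma D_fires_other {t : Tr} {q q' : P → ℕ} (ht : t ∉ N.transitions)
    (hD : ((N.comp N').restrict (H \ N'.transitions)).Fires q t q') :
    N.combine q' M0 = N.combine q M0 := by
  obtain ⟨⟨htD, hpre⟩, hfire⟩ := hD
  funext p
  by_cases hp : p ∈ N.places
  · have : q' p = q p + N.post t p - N.pre t p := by
      rw [hfire]
      simp only [PTNet.fire, if_pos (comp_places_mem.2 (Or.inl hp)),
        D_pre_pl htD hp, D_post_pl htD hp]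
    simp [PTNet.combine, hp, this, N.pre_eq_zero t ht, N.post_eq_zero t ht]
  · simp [PTNet.combine, hp]

private lemma D_pre_npl {t : Tr} {p : P}
    (ht : t ∈ ((N.comp N').restrict (H \ N'.transitions)).transitions) (hp : p ∉ N.places) :
    ((N.comp N').restrict (H \ N'.transitions)).pre t p = N'.pre t p := by
  simp only [PTNet.restrict] at ht ⊢
  rw [if_pos ht]
  simp [PTNet.comp, hp]

/-- A low transition enabled in the projection can fire in the composed system. -/
private lemma D_fires_low_intro (hT : N.transitions = L ∪ H) (hLH : Disjoint L H)
    (hd' : Disjoint N'.transitions L) {l : Tr} (hl : l ∈ L) {q : P → ℕ}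
    (hE : N.Enabled (N.combine q M0) l) :
    ∃ q', ((N.comp N').restrict (H \ N'.transitions)).Fires q l q' ∧
      N.combine q' M0 = N.fire (N.combine q M0) l := by
  have htD := D_trans_low (N' := N') hT hLH hl
  have hl' : l ∉ N'.transitions := fun hx => (Finset.disjoint_left.1 hd') hx hl
  have hEq : ((N.comp N').restrict (H \ N'.transitions)).Enabled q l := by
    refine ⟨htD, fun p hp => ?_⟩
    rcases comp_places_mem.1 hp with hp1 | hp2
    · rw [D_pre_pl htD hp1]
      have := hE.2 p hp1
      simpa [PTNet.combine, hp1] using this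
    · by_cases hp1 : p ∈ N.places
      · rw [D_pre_pl htD hp1]
        have := hE.2 p hp1
        simpa [PTNet.combine, hp1] using this
      · have : ((N.comp N').restrict (H \ N'.transitions)).pre l p = 0 := by
          have := D_pre_npl htD hp1
          rw [this, N'.pre_eq_zero l hl']
        simp [this]
  refine ⟨_, ⟨hEq, rfl⟩, ?_⟩
  have hlN : l ∈ N.transitions := by rw [hT]; exact Finset.mem_union_left _ hl
  exact (D_fires_pi (M0 := M0) hlN ⟨hEq, rfl⟩).2

end BndcAux3

section BndcAux4
set_option linter.unusedSectionVars false

variable {P Tr : Type _} [DecidableEq P] [DecidableEq Tr]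

private lemma bndc_of_hyp (N : PTNet P Tr) (M0 : P → ℕ) (L H : Finset Tr)
    (hT : N.transitions = L ∪ H) (hLH : Disjoint L H)
    (hyp : ∀ M1 M2 : P → ℕ, (N.restrict H).Reachable M0 M1 → N.Reachable M0 M2 →
      RRel N M0 L H M1 M2 → (N.restrict H).freeLang M1 = (N.restrict H).freeLang M2) :
    BNDC N M0 L H := by
  intro N' M0' hdp hdt
  set D := (N.comp N').restrict (H \ N'.transitions) with hD
  set B : (P → ℕ) → (P → ℕ) → Prop := fun M1 q =>
    (N.restrict H).Reachable M0 M1 ∧ N.Reachable M0 (N.combine q M0) ∧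
      RRel N M0 L H M1 (N.combine q M0) with hBdef
  have hinit : B M0 (N.combine M0 M0') := by
    refine ⟨⟨[], rfl⟩, ?_, ?_⟩ <;> rw [pi_combine M0 M0']
    · exact ⟨[], rfl⟩
    · exact RRel.base
  -- the response of the composed system to a low step of `N \ H`
  have resp1 : ∀ M1 q, B M1 q → ∀ σ ∈ L, ∀ M1', (N.restrict H).Fires M1 σ M1' →
      ∃ q', D.Fires q σ q' ∧ B M1' q' := by
    intro M1 q ⟨hr1, hr2, hR⟩ σ hσ M1' hstep
    have hlang := hyp M1 (N.combine q M0) hr1 hr2 hR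
    have hmem : [σ] ∈ (N.restrict H).freeLang (N.combine q M0) := by
      rw [← hlang]; exact ⟨M1', M1', hstep, rfl⟩
    obtain ⟨X, M'', hf, hX⟩ := hmem
    have hNf : N.Fires (N.combine q M0) σ M'' := (restrict_fires_iff hT hLH hσ).1 hf
    obtain ⟨q', hDf, hπ⟩ := D_fires_low_intro (M0 := M0) hT hLH hdt hσ hNf.1
    have hNf' : N.Fires (N.combine q M0) σ (N.combine q' M0) := ⟨hNf.1, hπ⟩
    refine ⟨q', hDf, reachable_step _ hr1 hstep, reachable_step N hr2 hNf',
      RRel.low hσ hR hstep hNf'⟩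
  -- the response of `N \ H` to a low step of the composed system
  have resp2 : ∀ M1 q, B M1 q → ∀ σ ∈ L, ∀ q', D.Fires q σ q' →
      ∃ M1', (N.restrict H).Fires M1 σ M1' ∧ B M1' q' := by
    intro M1 q ⟨hr1, hr2, hR⟩ σ hσ q' hstep
    have hσN : σ ∈ N.transitions := by rw [hT]; exact Finset.mem_union_left _ hσ
    have hNf : N.Fires (N.combine q M0) σ (N.combine q' M0) := D_fires_pi hσN hstep
    have hlang := hyp M1 (N.combine q M0) hr1 hr2 hR
    have hmem : [σ] ∈ (N.restrict H).freeLang M1 := by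
      rw [hlang]
      exact ⟨N.combine q' M0, N.combine q' M0, (restrict_fires_iff hT hLH hσ).2 hNf, rfl⟩
    obtain ⟨X, M1', hf, hX⟩ := hmem
    refine ⟨M1', hf, reachable_step _ hr1 hf, reachable_step N hr2 hNf,
      RRel.low hσ hR hf hNf⟩
  refine ⟨B, ⟨hinit, ?_⟩, ⟨hinit, ?_⟩⟩
  · intro M1 q hB
    constructor
    · intro σ hσ M1' hstep
      obtain ⟨q', hDf, hB'⟩ := resp1 M1 q hB σ hσ M1' hstep
      exact ⟨q, q', q', Relation.ReflTransGen.refl, hDf,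
        Relation.ReflTransGen.refl, hB'⟩
    · intro τ hτ M1' hstep
      exact absurd (Finset.mem_coe.2 (restrict_fires_low hT hLH hstep)) hτ
  · intro q M1 hB
    constructor
    · intro σ hσ q' hstep
      obtain ⟨M1', hf, hB'⟩ := resp2 M1 q hB σ hσ q' hstep
      exact ⟨M1, M1', M1', Relation.ReflTransGen.refl, hf,
        Relation.ReflTransGen.refl, hB'⟩
    · intro τ hτ q' hstep
      obtain ⟨hr1, hr2, hR⟩ := hB
      refine ⟨M1, Relation.ReflTransGen.refl, ?_⟩
      by_cases hτN : τ ∈ N.transitions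
      · have hτH : τ ∈ H := by
          have := hτN
          rw [hT, Finset.mem_union] at this
          rcases this with h | h
          · exact absurd (Finset.mem_coe.2 h) hτ
          · exact h
        have hNf : N.Fires (N.combine q M0) τ (N.combine q' M0) := D_fires_pi hτN hstep
        exact ⟨hr1, reachable_step N hr2 hNf, RRel.high hτH hR hNf⟩
      · have heq : N.combine q' M0 = N.combine q M0 := D_fires_other hτN hstep
        rw [hBdef]
        dsimp only
        rw [heq]
        exact ⟨hr1, hr2, hR⟩

end BndcAux4

section BndcAux5
set_option linter.unusedSectionVars false

variable {P Tr : Type _} [DecidableEq P] [DecidableEq Tr]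

/-- The gate net: a single place `p1` whose tokens are consumed by the
high transitions. -/
private def gateNet (p1 : P) (H : Finset Tr) : PTNet P Tr where
  places := {p1}
  transitions := H
  pre := fun t p => if t ∈ H ∧ p = p1 then 1 else 0
  post := fun _ _ => 0
  pre_eq_zero := by intro t ht p; simp [ht]
  post_eq_zero := fun _ _ _ => rfl

private lemma D_post_npl {N N' : PTNet P Tr} {H : Finset Tr} {t : Tr} {p : P}
    (ht : t ∈ ((N.comp N').restrict (H \ N'.transitions)).transitions) (hp : p ∉ N.places) :
    ((N.comp N').restrict (H \ N'.transitions)).post t p = N'.post t p := by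
  simp only [PTNet.restrict] at ht ⊢
  rw [if_pos ht]
  simp [PTNet.comp, hp]

variable {N : PTNet P Tr} {L H : Finset Tr} {p1 : P}

private lemma gate_trans : (gateNet p1 H).transitions = H := rfl

private lemma C_trans_iff (hT : N.transitions = L ∪ H) {t : Tr} :
    t ∈ ((N.comp (gateNet p1 H)).restrict (H \ (gateNet p1 H).transitions)).transitions ↔
      t ∈ N.transitions := by
  have hHT : H ⊆ N.transitions := by rw [hT]; exact Finset.subset_union_right
  simp only [PTNet.restrict, PTNet.comp, gate_trans, Finset.mem_sdiff, Finset.mem_union]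
  constructor
  · rintro ⟨h1 | h1, _⟩
    · exact h1
    · exact hHT h1
  · intro h
    exact ⟨Or.inl h, fun hx => hx.2 hx.1⟩

private lemma C_pre_p1 (hp1 : p1 ∉ N.places) {t : Tr}
    (ht : t ∈ ((N.comp (gateNet p1 H)).restrict (H \ (gateNet p1 H).transitions)).transitions) :
    ((N.comp (gateNet p1 H)).restrict (H \ (gateNet p1 H).transitions)).pre t p1 =
      if t ∈ H then 1 else 0 := by
  rw [D_pre_npl ht hp1]
  simp [gateNet]

private lemma C_post_p1 (hp1 : p1 ∉ N.places) {t : Tr}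
    (ht : t ∈ ((N.comp (gateNet p1 H)).restrict (H \ (gateNet p1 H).transitions)).transitions) :
    ((N.comp (gateNet p1 H)).restrict (H \ (gateNet p1 H).transitions)).post t p1 = 0 := by
  rw [D_post_npl ht hp1]
  simp [gateNet]

private lemma p1_mem_C_places :
    p1 ∈ ((N.comp (gateNet p1 H)).restrict (H \ (gateNet p1 H).transitions)).places :=
  comp_places_mem.2 (Or.inr (by simp [gateNet]))

/-- No unobservable step of the gated composition is possible when the gate is empty. -/
private lemma C_no_tau (hT : N.transitions = L ∪ H) (hp1 : p1 ∉ N.places)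
    {q q' : P → ℕ} {τ : Tr} (hq : q p1 = 0) (hτ : τ ∉ L)
    (hf : ((N.comp (gateNet p1 H)).restrict (H \ (gateNet p1 H).transitions)).Fires q τ q') :
    False := by
  have ht := hf.1.1
  have hτH : τ ∈ H := by
    have := (C_trans_iff hT).1 ht
    rw [hT, Finset.mem_union] at this
    exact this.resolve_left hτ
  have := hf.1.2 p1 p1_mem_C_places
  rw [C_pre_p1 hp1 ht, if_pos hτH, hq] at this
  omega

/-- Unobservable runs of the gated composition from an empty gate are trivial. -/
private lemma C_tauStar_zero (hT : N.transitions = L ∪ H) (hp1 : p1 ∉ N.places)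
    {Minit q q' : P → ℕ}
    (hq : q p1 = 0)
    (h : LTS.TauStar (((N.comp (gateNet p1 H)).restrict
      (H \ (gateNet p1 H).transitions)).toLTS Minit) (↑L : Set Tr) q q') : q' = q := by
  rcases h.cases_head with h1 | ⟨c, ⟨τ, hτ, hfc⟩, _⟩
  · exact h1.symm
  · exact absurd hfc (fun hf => C_no_tau hT hp1 hq (fun hx => hτ (Finset.mem_coe.2 hx)) hf)

/-- Firing a low transition does not change the gate place. -/
private lemma C_fire_p1_low (hp1 : p1 ∉ N.places) (hLH : Disjoint L H) {q q' : P → ℕ} {σ : Tr}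
    (hσ : σ ∈ L)
    (hf : ((N.comp (gateNet p1 H)).restrict (H \ (gateNet p1 H).transitions)).Fires q σ q') :
    q' p1 = q p1 := by
  have ht := hf.1.1
  have hσH : σ ∉ H := fun hx => (Finset.disjoint_left.1 hLH) hσ hx
  rw [hf.2]
  simp only [PTNet.fire, if_pos (p1_mem_C_places (N := N)), C_pre_p1 hp1 ht,
    C_post_p1 hp1 ht, if_neg hσH]
  omega

/-- The canonical composed marking: `M` on the places of `N`, `j` on the gate,
`k` elsewhere. -/
private def gstate (N : PTNet P Tr) (p1 : P) (M : P → ℕ) (j k : ℕ) : P → ℕ :=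
  fun p => if p ∈ N.places then M p else if p = p1 then j else k

private lemma gstate_p1 (hp1 : p1 ∉ N.places) (M : P → ℕ) (j k : ℕ) :
    gstate N p1 M j k p1 = j := by simp [gstate, hp1]

private lemma combine_gstate (M : P → ℕ) (k : ℕ) :
    N.combine M (fun _ => k) = gstate N p1 M k k := by
  funext p
  simp only [PTNet.combine, gstate]
  split
  · rfl
  · split <;> rfl

private lemma pi_gstate (M0 : P → ℕ) (M : P → ℕ) (j k : ℕ) :
    N.combine (gstate N p1 M j k) M0 = N.combine M M0 := by
  funext p
  simp only [PTNet.combine, gstate]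
  split <;> rfl

/-- Low firing in the gated composition, in `gstate` form. -/
private lemma C_fires_g_low (hT : N.transitions = L ∪ H) (hLH : Disjoint L H)
    (hp1 : p1 ∉ N.places) {σ : Tr} (hσ : σ ∈ L) {M M' : P → ℕ} (j k : ℕ)
    (hf : N.Fires M σ M') :
    ((N.comp (gateNet p1 H)).restrict (H \ (gateNet p1 H).transitions)).Fires
      (gstate N p1 M j k) σ (gstate N p1 M' j k) := by
  have ht : σ ∈ ((N.comp (gateNet p1 H)).restrict
      (H \ (gateNet p1 H).transitions)).transitions := (C_trans_iff hT).2 hf.1.1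
  have hσH : σ ∉ H := fun hx => (Finset.disjoint_left.1 hLH) hσ hx
  refine ⟨⟨ht, fun p hp => ?_⟩, ?_⟩
  · rcases comp_places_mem.1 hp with hp' | hp'
    · rw [D_pre_pl ht hp']
      simpa [gstate, hp'] using hf.1.2 p hp'
    · have hpp1 : p = p1 := by simpa [gateNet] using hp'
      subst hpp1
      rw [C_pre_p1 hp1 ht, if_neg hσH]
      omega
  · funext p
    by_cases hp : p ∈ N.places
    · have hpC := comp_places_mem (N' := gateNet p1 H) (H := H) |>.2 (Or.inl hp)
      simp only [PTNet.fire, if_pos hpC, D_pre_pl ht hp, D_post_pl ht hp, gstate, if_pos hp,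
        hf.2]
    · by_cases hpp1 : p = p1
      · subst hpp1
        simp only [PTNet.fire, if_pos (p1_mem_C_places (N := N)), C_pre_p1 hp1 ht,
          C_post_p1 hp1 ht, if_neg hσH, gstate, if_neg hp1]
        simp
      · have hpC : p ∉ ((N.comp (gateNet p1 H)).restrict
            (H \ (gateNet p1 H).transitions)).places := by
          intro hx
          rcases comp_places_mem.1 hx with h | h
          · exact hp h
          · exact hpp1 (by simpa [gateNet] using h)
        simp only [PTNet.fire, if_neg hpC, gstate, if_neg hp, if_neg hpp1]

/-- High firing in the gated composition, in `gstate` form. -/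
private lemma C_fires_g_high (hT : N.transitions = L ∪ H)
    (hp1 : p1 ∉ N.places) {h : Tr} (hh : h ∈ H) {M M' : P → ℕ} {j : ℕ} (k : ℕ) (hj : 1 ≤ j)
    (hf : N.Fires M h M') :
    ((N.comp (gateNet p1 H)).restrict (H \ (gateNet p1 H).transitions)).Fires
      (gstate N p1 M j k) h (gstate N p1 M' (j - 1) k) := by
  have ht : h ∈ ((N.comp (gateNet p1 H)).restrict
      (H \ (gateNet p1 H).transitions)).transitions := (C_trans_iff hT).2 hf.1.1
  refine ⟨⟨ht, fun p hp => ?_⟩, ?_⟩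
  · rcases comp_places_mem.1 hp with hp' | hp'
    · rw [D_pre_pl ht hp']
      simpa [gstate, hp'] using hf.1.2 p hp'
    · have hpp1 : p = p1 := by simpa [gateNet] using hp'
      subst hpp1
      rw [C_pre_p1 hp1 ht, if_pos hh, gstate_p1 hp1]
      exact hj
  · funext p
    by_cases hp : p ∈ N.places
    · have hpC := comp_places_mem (N' := gateNet p1 H) (H := H) |>.2 (Or.inl hp)
      simp only [PTNet.fire, if_pos hpC, D_pre_pl ht hp, D_post_pl ht hp, gstate, if_pos hp,
        hf.2]
    · by_cases hpp1 : p = p1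
      · subst hpp1
        simp only [PTNet.fire, if_pos (p1_mem_C_places (N := N)), C_pre_p1 hp1 ht,
          C_post_p1 hp1 ht, if_pos hh, gstate, if_neg hp1]
        simp
      · have hpC : p ∉ ((N.comp (gateNet p1 H)).restrict
            (H \ (gateNet p1 H).transitions)).places := by
          intro hx
          rcases comp_places_mem.1 hx with hx' | hx'
          · exact hp hx'
          · exact hpp1 (by simpa [gateNet] using hx')
        simp only [PTNet.fire, if_neg hpC, gstate, if_neg hp, if_neg hpp1]

end BndcAux5

section BndcAux6
set_option linter.unusedSectionVars false

variable {P Tr : Type _} [DecidableEq P] [DecidableEq Tr]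
variable {N : PTNet P Tr} {L H : Finset Tr} {p1 : P} {M0 : P → ℕ}

private lemma pure_sub (hT : N.transitions = L ∪ H) (hLH : Disjoint L H)
    (hp1 : p1 ∉ N.places) {Minit : P → ℕ} {B : (P → ℕ) → (P → ℕ) → Prop}
    (hbis : IsWeakBisimulation (↑L : Set Tr) ((N.restrict H).toLTS M0)
      (((N.comp (gateNet p1 H)).restrict (H \ (gateNet p1 H).transitions)).toLTS Minit) B) :
    ∀ (s : List Tr), ∀ (M q X : P → ℕ), B M q → q p1 = 0 →
      (N.restrict H).FiresSeq M s X →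
      ∃ Y, (N.restrict H).FiresSeq (N.combine q M0) s Y := by
  intro s
  induction s with
  | nil => intro M q X _ _ _; exact ⟨N.combine q M0, rfl⟩
  | cons t s ih =>
      rintro M q X hB hq ⟨M'', hf, hs⟩
      have htL : t ∈ L := restrict_fires_low hT hLH hf
      obtain ⟨q1'', q2'', q2', hts1, htr, hts2, hB'⟩ :=
        (hbis.1.2 M q hB).1 t (Finset.mem_coe.2 htL) M'' hf
      have h1 : q1'' = q := C_tauStar_zero hT hp1 hq hts1
      rw [h1] at htr
      have htr' : ((N.comp (gateNet p1 H)).restrict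
          (H \ (gateNet p1 H).transitions)).Fires q t q2'' := htr
      have hq2 : q2'' p1 = 0 := by rw [C_fire_p1_low hp1 hLH htL htr', hq]
      have h2 : q2' = q2'' := C_tauStar_zero hT hp1 hq2 hts2
      rw [h2] at hB'
      have htT : t ∈ N.transitions := by rw [hT]; exact Finset.mem_union_left _ htL
      have hNf : N.Fires (N.combine q M0) t (N.combine q2'' M0) := D_fires_pi htT htr'
      have hRf : (N.restrict H).Fires (N.combine q M0) t (N.combine q2'' M0) :=
        (restrict_fires_iff hT hLH htL).2 hNf
      obtain ⟨Y, hY⟩ := ih M'' q2'' X hB' hq2 hs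
      exact ⟨Y, N.combine q2'' M0, hRf, hY⟩

private lemma pure_sup (hT : N.transitions = L ∪ H) (hLH : Disjoint L H)
    (hp1 : p1 ∉ N.places) {Minit : P → ℕ} {B : (P → ℕ) → (P → ℕ) → Prop}
    (hbis : IsWeakBisimulation (↑L : Set Tr) ((N.restrict H).toLTS M0)
      (((N.comp (gateNet p1 H)).restrict (H \ (gateNet p1 H).transitions)).toLTS Minit) B) :
    ∀ (s : List Tr), ∀ (M q Y : P → ℕ), B M q →
      (N.restrict H).FiresSeq (N.combine q M0) s Y →
      ∃ X, (N.restrict H).FiresSeq M s X := by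
  have hdt : Disjoint (gateNet p1 H).transitions L := by
    rw [gate_trans]; exact hLH.symm
  intro s
  induction s with
  | nil => intro M q Y _ _; exact ⟨M, rfl⟩
  | cons t s ih =>
      rintro M q Y hB ⟨M'', hf, hs⟩
      have htL : t ∈ L := restrict_fires_low hT hLH hf
      have hNf : N.Fires (N.combine q M0) t M'' := (restrict_fires_iff hT hLH htL).1 hf
      obtain ⟨q', hCf, hπ⟩ := D_fires_low_intro (M0 := M0) hT hLH hdt htL hNf.1
      have hM'' : N.combine q' M0 = M'' := by rw [hπ, ← hNf.2]
      obtain ⟨a, b, c, hts1, htr, hts2, hBc⟩ := (hbis.2.2 q M hB).1 t (Finset.mem_coe.2 htL) q' hCf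
      have h1 : M = a := restrict_tauStar_eq hT hLH hts1
      subst h1
      have h2 : b = c := restrict_tauStar_eq hT hLH hts2
      subst h2
      rw [← hM''] at hs
      obtain ⟨X, hX⟩ := ih b q' Y hBc hs
      exact ⟨X, b, htr, hX⟩

private lemma pure_lang (hT : N.transitions = L ∪ H) (hLH : Disjoint L H)
    (hp1 : p1 ∉ N.places) {Minit : P → ℕ} {B : (P → ℕ) → (P → ℕ) → Prop}
    (hbis : IsWeakBisimulation (↑L : Set Tr) ((N.restrict H).toLTS M0)
      (((N.comp (gateNet p1 H)).restrict (H \ (gateNet p1 H).transitions)).toLTS Minit) B)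
    (M q : P → ℕ) (hB : B M q) (hq : q p1 = 0) :
    (N.restrict H).freeLang M = (N.restrict H).freeLang (N.combine q M0) := by
  ext s
  constructor
  · rintro ⟨X, hX⟩
    exact pure_sub hT hLH hp1 hbis s M q X hB hq hX
  · rintro ⟨Y, hY⟩
    exact pure_sup hT hLH hp1 hbis s M q Y hB hY

private lemma replay (hT : N.transitions = L ∪ H) (hLH : Disjoint L H)
    (hp1 : p1 ∉ N.places) {Minit : P → ℕ} {B : (P → ℕ) → (P → ℕ) → Prop} {k : ℕ}
    (hbis : IsWeakBisimulation (↑L : Set Tr) ((N.restrict H).toLTS M0)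
      (((N.comp (gateNet p1 H)).restrict (H \ (gateNet p1 H).transitions)).toLTS Minit) B) :
    ∀ (w : List Tr), ∀ (M M1 Mw : P → ℕ) (j : ℕ),
      N.FiresSeq M w M1 → B Mw (gstate N p1 M j k) →
      (w.countP fun t => t ∈ H) ≤ j →
      ∃ Mw', (N.restrict H).FiresSeq Mw (w.filter fun t => t ∈ L) Mw' ∧
        B Mw' (gstate N p1 M1 (j - (w.countP fun t => t ∈ H)) k) := by
  intro w
  induction w with
  | nil =>
      intro M M1 Mw j hs hB _
      cases hs
      exact ⟨Mw, rfl, by simpa using hB⟩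
  | cons t w ih =>
      rintro M M1 Mw j ⟨M'', hf, hs⟩ hB hcnt
      have htT : t ∈ N.transitions := hf.1.1
      rw [hT, Finset.mem_union] at htT
      rcases htT with htL | htH
      · -- low step
        have htH : t ∉ H := fun hx => (Finset.disjoint_left.1 hLH) htL hx
        have hCf := C_fires_g_low hT hLH hp1 htL j k hf
        obtain ⟨a, b, c, hts1, htr, hts2, hBc⟩ :=
          (hbis.2.2 _ Mw hB).1 t (Finset.mem_coe.2 htL) _ hCf
        have h1 : Mw = a := restrict_tauStar_eq hT hLH hts1
        subst h1
        have h2 : b = c := restrict_tauStar_eq hT hLH hts2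
        subst h2
        have hcnt' : (w.countP fun t => t ∈ H) ≤ j := by
          simp only [List.countP_cons, htH] at hcnt ⊢
          omega
        obtain ⟨Mw', hseq, hB'⟩ := ih M'' M1 b j hs hBc hcnt'
        refine ⟨Mw', ?_, ?_⟩
        · have : (t :: w).filter (fun t => t ∈ L) = t :: w.filter (fun t => t ∈ L) := by
            simp [htL]
          rw [this]
          exact ⟨b, htr, hseq⟩
        · have : (t :: w).countP (fun t => t ∈ H) = w.countP (fun t => t ∈ H) := by
            simp [List.countP_cons, htH]
          rw [this]
          exact hB'
      · -- high step
        have htL : t ∉ L := fun hx => (Finset.disjoint_left.1 hLH) hx htH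
        have hceq : ((t :: w).countP fun t => t ∈ H) =
            (w.countP fun t => t ∈ H) + 1 := by
          simp [List.countP_cons, htH]
        rw [hceq] at hcnt
        have hCf := C_fires_g_high (j := j) hT hp1 htH k (by omega) hf
        obtain ⟨q2', hts, hB'⟩ :=
          (hbis.2.2 _ Mw hB).2 t (fun hx => htL (Finset.mem_coe.1 hx)) _ hCf
        have h1 : Mw = q2' := restrict_tauStar_eq hT hLH hts
        subst h1
        obtain ⟨Mw', hseq, hB''⟩ := ih M'' M1 Mw (j - 1) hs hB' (by omega)
        refine ⟨Mw', ?_, ?_⟩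
        · have : (t :: w).filter (fun t => t ∈ L) = w.filter (fun t => t ∈ L) := by
            simp [htL]
          rw [this]
          exact hseq
        · have : j - ((t :: w).countP fun t => t ∈ H) =
              (j - 1) - (w.countP fun t => t ∈ H) := by
            simp only [List.countP_cons, htH]
            simp only [decide_true, if_true]
            omega
          rw [this]
          exact hB''

private lemma step_lemma [Infinite P] (N : PTNet P Tr) (M0 : P → ℕ) (L H : Finset Tr)
    (hT : N.transitions = L ∪ H) (hLH : Disjoint L H) (hbndc : BNDC N M0 L H)
    {w : List Tr} {M1 M2 : P → ℕ} {h : Tr} (hw : N.FiresSeq M0 w M1) (hh : h ∈ H)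
    (hf : N.Fires M1 h M2) :
    (N.restrict H).freeLang M1 = (N.restrict H).freeLang M2 := by
  obtain ⟨p1, hp1⟩ := Infinite.exists_notMem_finset N.places
  have hdp : Disjoint N.places (gateNet p1 H).places := by
    simp [gateNet, Finset.disjoint_singleton_right, hp1]
  have hdt : Disjoint (gateNet p1 H).transitions L := by
    rw [gate_trans]; exact hLH.symm
  set cnt := w.countP fun t => t ∈ H with hcnt
  -- helper for the language congruence at the end
  have hag : ∀ (M : P → ℕ) (j k : ℕ),
      (N.restrict H).freeLang (N.combine (gstate N p1 M j k) M0) =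
        (N.restrict H).freeLang M := by
    intro M j k
    refine freeLang_congr _ fun p hp => ?_
    have hp' : p ∈ N.places := hp
    simp [PTNet.combine, gstate, hp']
  -- instance A : gate with `cnt` tokens
  obtain ⟨B, hbis⟩ := hbndc (gateNet p1 H) (fun _ => cnt) hdp hdt
  have hinit : B M0 (gstate N p1 M0 cnt cnt) := by
    have := hbis.1.1
    rwa [combine_gstate] at this
  obtain ⟨Mw, hMw, hBMw⟩ := replay hT hLH hp1 hbis w M0 M1 M0 cnt hw hinit le_rfl
  rw [Nat.sub_self] at hBMw
  have e1 : (N.restrict H).freeLang Mw = (N.restrict H).freeLang M1 := by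
    have := pure_lang hT hLH hp1 hbis Mw _ hBMw (by rw [gstate_p1 hp1])
    rw [this, hag]
  -- instance B : gate with `cnt + 1` tokens
  obtain ⟨B', hbis'⟩ := hbndc (gateNet p1 H) (fun _ => cnt + 1) hdp hdt
  have hinit' : B' M0 (gstate N p1 M0 (cnt + 1) (cnt + 1)) := by
    have := hbis'.1.1
    rwa [combine_gstate] at this
  obtain ⟨Mw2, hMw2, hBMw2⟩ := replay hT hLH hp1 hbis' w M0 M1 M0 (cnt + 1) hw hinit'
    (by omega)
  have hj1 : cnt + 1 - cnt = 1 := by omega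
  rw [hj1] at hBMw2
  have hMweq : Mw2 = Mw := firesSeq_det _ hMw2 hMw
  subst hMweq
  have hCf := C_fires_g_high (M' := M2) (j := 1) hT hp1 hh (cnt + 1) le_rfl hf
  have hτ : h ∉ (↑L : Set Tr) :=
    fun hx => (Finset.disjoint_right.1 hLH hh) (Finset.mem_coe.1 hx)
  obtain ⟨q2', hts, hB3⟩ := (hbis'.2.2 _ Mw2 hBMw2).2 h hτ _ hCf
  have h1 : Mw2 = q2' := restrict_tauStar_eq hT hLH hts
  subst h1
  have e2 : (N.restrict H).freeLang Mw2 = (N.restrict H).freeLang M2 := by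
    have := pure_lang hT hLH hp1 hbis' Mw2 _ hB3 (by rw [gstate_p1 hp1])
    rw [this, hag]
  exact e1.symm.trans e2

end BndcAux6

/-- `N` has BNDC iff for all reachable markings `M1` of `N \ H`
and `M2` of `N`, `M1 R M2` entails `L(N\H, M1) = L(N\H, M2)`. -/
theorem bndc_iff_rrel_lang_eq
    {P Tr : Type _} [DecidableEq P] [DecidableEq Tr] [Infinite P]
    (N : PTNet P Tr) (M0 : P → ℕ) (L H : Finset Tr)
    (hT : N.transitions = L ∪ H) (hLH : Disjoint L H) :
    BNDC N M0 L H ↔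
      ∀ M1 M2 : P → ℕ, (N.restrict H).Reachable M0 M1 → N.Reachable M0 M2 →
        RRel N M0 L H M1 M2 →
        (N.restrict H).freeLang M1 = (N.restrict H).freeLang M2 := by
  constructor
  · intro hbndc M1 M2 _ _ hR
    have key : ∀ M1 M2 : P → ℕ, RRel N M0 L H M1 M2 →
        N.Reachable M0 M2 ∧ (N.restrict H).freeLang M1 = (N.restrict H).freeLang M2 := by
      intro M1 M2 hR
      induction hR with
      | base => exact ⟨⟨[], rfl⟩, rfl⟩
      | high hh _ hf ih =>
          obtain ⟨⟨w, hw⟩, heq⟩ := ih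
          exact ⟨reachable_step N ⟨w, hw⟩ hf,
            heq.trans (step_lemma N M0 L H hT hLH hbndc hw hh hf)⟩
      | low hl _ hf1 hf2 ih =>
          obtain ⟨hreach, heq⟩ := ih
          refine ⟨reachable_step N hreach hf2, ?_⟩
          have hf2' := (restrict_fires_iff hT hLH hl).2 hf2
          rw [freeLang_fire _ hf1, freeLang_fire _ hf2', heq]
    exact (key M1 M2 hR).2
  · exact bndc_of_hyp N M0 L H hT hLH
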